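/- For every t ∈ (0,1) with t ≠ 1/3, the set Λ(t) = {λ ∈ (0,1/3] : C_λ ∩ (C_λ + t) ≠ ∅} satisfies min Λ(t) = min{t, (1−t)/2} and max Λ(t) = 1/3. -/

import Mathlib

open scoped Pointwise

/-- `PiFun i λ = (1-λ) ∑_{n≥0} i_n λ^n`, the series Π from the paper (0-based indexing). -/
noncomputable def PiFun (i : ℕ → ℝ) (l : ℝ) : ℝ := (1 - l) * ∑' n : ℕ, i n * l ^ n

/-- `i` is a sequence over the alphabet `{-1,0,1}`. -/
def IsCoding (i : ℕ → ℝ) : Prop := ∀ n, i n = -1 ∨ i n = 0 ∨ i n = 1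

/-- Strict lexicographic order on sequences. -/
def LexLt (i j : ℕ → ℝ) : Prop := ∃ m, (∀ n, n < m → i n = j n) ∧ i m < j m

/-- Non-strict lexicographic order on sequences. -/
def LexLe (i j : ℕ → ℝ) : Prop := LexLt i j ∨ i = j

-- `rho i j = 3^{-k}` where `k` is the first (0-based) index at which the sequences differ
-- (this equals `3^{1-k}` for 1-based indexing as in the paper).
open Classical in
noncomputable def rho (i j : ℕ → ℝ) : ℝ :=
  if i = j then 0 else (3 : ℝ) ^ (-((sInf {n : ℕ | i n ≠ j n} : ℕ) : ℤ))

/-- The middle-`(1-2λ)` Cantor set `C_λ`. -/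
def Cset (l : ℝ) : Set ℝ :=
  {x | ∃ i : ℕ → ℝ, (∀ n, i n = 0 ∨ i n = 1) ∧ x = (1 - l) * ∑' n : ℕ, i n * l ^ n}

/-- `Λ(t) = {λ ∈ (0,1/3] : t ∈ C_λ - C_λ}`. -/
def Lam (t : ℝ) : Set ℝ := {l | l ∈ Set.Ioc (0 : ℝ) (1/3) ∧ t ∈ Cset l - Cset l}

/-! ### Auxiliary lemmas -/

lemma summable_cod_abs {j : ℕ → ℝ} (hj : ∀ n, |j n| ≤ 1) {l : ℝ} (h0 : 0 ≤ l) (h1 : l < 1) :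
    Summable fun n => |j n * l ^ n| := by
  have hg : Summable fun n : ℕ => l ^ n := summable_geometric_of_lt_one h0 h1
  refine hg.of_nonneg_of_le (fun n => abs_nonneg _) fun n => ?_
  rw [abs_mul, abs_pow, abs_of_nonneg h0]
  calc |j n| * l ^ n ≤ 1 * l ^ n :=
        mul_le_mul_of_nonneg_right (hj n) (pow_nonneg h0 n)
    _ = l ^ n := one_mul _

lemma summable_cod {j : ℕ → ℝ} (hj : ∀ n, |j n| ≤ 1) {l : ℝ} (h0 : 0 ≤ l) (h1 : l < 1) :
    Summable fun n => j n * l ^ n :=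
  (summable_cod_abs hj h0 h1).of_abs

lemma abs_tsum_cod {j : ℕ → ℝ} (hj : ∀ n, |j n| ≤ 1) {l : ℝ} (h0 : 0 ≤ l) (h1 : l < 1) :
    |∑' n, j n * l ^ n| ≤ (1 - l)⁻¹ := by
  have hg : Summable fun n : ℕ => l ^ n := summable_geometric_of_lt_one h0 h1
  have h2 : |∑' n, j n * l ^ n| ≤ ∑' n, |j n * l ^ n| := by
    have := norm_tsum_le_tsum_norm (f := fun n => j n * l ^ n)
      (by simpa only [Real.norm_eq_abs] using summable_cod_abs hj h0 h1)
    simpa only [Real.norm_eq_abs] using this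
  refine h2.trans ?_
  have h3 : ∑' n, |j n * l ^ n| ≤ ∑' n : ℕ, l ^ n := by
    refine (summable_cod_abs hj h0 h1).tsum_le_tsum (fun n => ?_) hg
    rw [abs_mul, abs_pow, abs_of_nonneg h0]
    calc |j n| * l ^ n ≤ 1 * l ^ n :=
          mul_le_mul_of_nonneg_right (hj n) (pow_nonneg h0 n)
      _ = l ^ n := one_mul _
  simpa [tsum_geometric_of_lt_one h0 h1] using h3

lemma coding_abs {j : ℕ → ℝ} (hj : IsCoding j) : ∀ n, |j n| ≤ 1 := by
  intro n; rcases hj n with h | h | h <;> rw [h] <;> norm_num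

lemma lower_bound {t l : ℝ} (ht0 : 0 < t) (hl0 : 0 < l) (hl3 : l ≤ 1/3)
    {j : ℕ → ℝ} (hj : IsCoding j)
    (ht : t = (1 - l) * ∑' n, j n * l ^ n) : min t ((1 - t) / 2) ≤ l := by
  classical
  have hl1 : l < 1 := by linarith
  have habs := coding_abs hj
  have hsum : Summable fun n => j n * l ^ n := summable_cod habs hl0.le hl1
  have hex : ∃ n, j n ≠ 0 := by
    by_contra h
    push_neg at h
    have hz : (∑' n, j n * l ^ n) = 0 := by simp [h]
    rw [hz, mul_zero] at ht; linarith
  set k := Nat.find hex with hkdef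
  have hk : j k ≠ 0 := Nat.find_spec hex
  have hk' : ∀ m, m < k → j m = 0 := fun m hm => not_not.mp (Nat.find_min hex hm)
  set S' := ∑' n, j (n + (k+1)) * l ^ n with hS'
  have hfin : ∑ i ∈ Finset.range k, j i * l ^ i = 0 :=
    Finset.sum_eq_zero fun i hi => by rw [hk' i (Finset.mem_range.mp hi), zero_mul]
  have hT : (∑' n, j n * l ^ n) = j k * l ^ k + l ^ (k+1) * S' := by
    have h1 := hsum.sum_add_tsum_nat_add (f := fun n => j n * l ^ n) (k+1)
    rw [← h1]
    congr 1
    · rw [Finset.sum_range_succ, hfin, zero_add]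
    · rw [hS', ← tsum_mul_left]
      congr 1; funext n
      rw [pow_add]; ring
  have hS'b : |S'| ≤ (1 - l)⁻¹ := abs_tsum_cod (fun n => habs _) hl0.le hl1
  rw [abs_le] at hS'b
  have hlk : (0:ℝ) < l ^ k := pow_pos hl0 k
  have hlk1 : l ^ (k+1) = l * l ^ k := by rw [pow_succ]; ring
  have hinv : (1 - l) * (1 - l)⁻¹ = 1 := mul_inv_cancel₀ (by linarith)
  have hu : (1 - l) * S' ≤ 1 := by
    calc (1 - l) * S' ≤ (1 - l) * (1 - l)⁻¹ :=
          mul_le_mul_of_nonneg_left hS'b.2 (by linarith)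
      _ = 1 := hinv
  have hlo : -1 ≤ (1 - l) * S' := by
    calc (-1 : ℝ) = (1 - l) * (-(1 - l)⁻¹) := by rw [mul_neg, hinv]
      _ ≤ (1 - l) * S' := mul_le_mul_of_nonneg_left hS'b.1 (by linarith)
  have hprod1 : l * l ^ k * ((1 - l) * S') ≤ l * l ^ k :=
    calc l * l ^ k * ((1 - l) * S') ≤ l * l ^ k * 1 :=
          mul_le_mul_of_nonneg_left hu (by positivity)
      _ = l * l ^ k := mul_one _
  have hprod2 : -(l * l ^ k) ≤ l * l ^ k * ((1 - l) * S') :=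
    calc -(l * l ^ k) = l * l ^ k * (-1) := by ring
      _ ≤ l * l ^ k * ((1 - l) * S') := mul_le_mul_of_nonneg_left hlo (by positivity)
  have hteq : t = j k * ((1 - l) * l ^ k) + l * l ^ k * ((1 - l) * S') := by
    rw [ht, hT, hlk1]; ring
  rcases hj k with h | h | h
  · -- j k = -1 : contradiction
    exfalso
    rw [h] at hteq
    nlinarith [hlk]
  · exact absurd h hk
  · rw [h] at hteq
    have hub : t ≤ l ^ k := by nlinarith
    have hlb : l ^ k * (1 - 2*l) ≤ t := by nlinarith
    rcases Nat.eq_zero_or_pos k with hk0 | hk0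
    · rw [hk0] at hlb
      simp at hlb
      have : (1 - t)/2 ≤ l := by linarith
      exact le_trans (min_le_right _ _) this
    · have : l ^ k ≤ l := by
        calc l ^ k ≤ l ^ 1 := pow_le_pow_of_le_one hl0.le hl1.le hk0
          _ = l := pow_one l
      exact le_trans (min_le_left _ _) (hub.trans this)

lemma mem_of_coding {l t : ℝ} (h0 : 0 < l) (h1 : l < 1) {j : ℕ → ℝ} (hj : IsCoding j)
    (ht : t = (1 - l) * ∑' n, j n * l ^ n) :
    (Cset l ∩ ((fun x => x + t) '' Cset l)).Nonempty := by
  classical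
  set a : ℕ → ℝ := fun n => if j n = 1 then 1 else 0 with ha
  set b : ℕ → ℝ := fun n => if j n = -1 then 1 else 0 with hb
  have hab : ∀ n, a n - b n = j n := by
    intro n; rcases hj n with h | h | h <;> simp [ha, hb, h] <;> norm_num
  have haabs : ∀ n, |a n| ≤ 1 := by
    intro n; rw [ha]; dsimp only; split_ifs <;> norm_num
  have hbabs : ∀ n, |b n| ≤ 1 := by
    intro n; rw [hb]; dsimp only; split_ifs <;> norm_num
  have hsa : Summable fun n => a n * l ^ n := summable_cod haabs h0.le h1
  have hsb : Summable fun n => b n * l ^ n := summable_cod hbabs h0.le h1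
  have hdiff : (∑' n, a n * l ^ n) - (∑' n, b n * l ^ n) = ∑' n, j n * l ^ n := by
    rw [← hsa.tsum_sub hsb]
    congr 1; funext n; rw [← hab n]; ring
  refine ⟨(1 - l) * ∑' n, a n * l ^ n,
    ⟨a, fun n => by rw [ha]; dsimp only; split_ifs <;> simp, rfl⟩,
    (1 - l) * ∑' n, b n * l ^ n,
    ⟨b, fun n => by rw [hb]; dsimp only; split_ifs <;> simp, rfl⟩, ?_⟩
  show (1 - l) * ∑' n, b n * l ^ n + t = (1 - l) * ∑' n, a n * l ^ n
  rw [ht, ← hdiff]; ring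

/-! ### Balanced ternary expansion -/

noncomputable def btRem (s : ℝ) : ℕ → ℝ
  | 0 => s
  | n+1 =>
      if 1/2 ≤ btRem s n then 3 * (btRem s n - 1)
      else if btRem s n ≤ -(1/2) then 3 * (btRem s n + 1)
      else 3 * btRem s n

noncomputable def btDig (s : ℝ) (n : ℕ) : ℝ :=
  if 1/2 ≤ btRem s n then 1 else if btRem s n ≤ -(1/2) then -1 else 0

lemma btRem_succ (s : ℝ) (n : ℕ) : btRem s (n+1) = 3 * (btRem s n - btDig s n) := by
  rw [btRem, btDig]; split_ifs <;> ring

lemma btDig_mem (s : ℝ) : IsCoding (btDig s) := by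
  intro n; rw [btDig]; split_ifs <;> simp

lemma btRem_bound {s : ℝ} (hs : |s| ≤ 3/2) : ∀ n, |btRem s n| ≤ 3/2 := by
  intro n
  induction n with
  | zero => exact hs
  | succ n ih =>
    rw [btRem_succ, btDig]
    rw [abs_le] at ih ⊢
    split_ifs with h1 h2 <;> constructor <;> (try push_neg at *) <;> linarith

lemma btPartial (s : ℝ) (n : ℕ) :
    ∑ i ∈ Finset.range n, btDig s i * (1/3 : ℝ) ^ i = s - (1/3) ^ n * btRem s n := by
  induction n with
  | zero => simp [btRem]
  | succ n ih =>
    rw [Finset.sum_range_succ, ih, btRem_succ]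
    ring

lemma btTsum {s : ℝ} (hs : |s| ≤ 3/2) : ∑' n, btDig s n * (1/3 : ℝ) ^ n = s := by
  have habs : ∀ n, |btDig s n| ≤ 1 := coding_abs (btDig_mem s)
  have hsum : Summable fun n => btDig s n * (1/3 : ℝ) ^ n :=
    summable_cod habs (by norm_num) (by norm_num)
  have h1 : Filter.Tendsto (fun n => ∑ i ∈ Finset.range n, btDig s i * (1/3 : ℝ) ^ i)
      Filter.atTop (nhds (∑' n, btDig s n * (1/3 : ℝ) ^ n)) := hsum.hasSum.tendsto_sum_nat
  have h0 : Filter.Tendsto (fun n : ℕ => (1/3 : ℝ) ^ n * btRem s n) Filter.atTop (nhds 0) := by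
    apply squeeze_zero_norm (a := fun n : ℕ => (3/2) * (1/3 : ℝ) ^ n)
    · intro n
      rw [Real.norm_eq_abs, abs_mul, abs_pow, abs_of_nonneg (by norm_num : (0:ℝ) ≤ 1/3)]
      calc (1/3 : ℝ) ^ n * |btRem s n| ≤ (1/3 : ℝ) ^ n * (3/2) :=
            mul_le_mul_of_nonneg_left (btRem_bound hs n) (by positivity)
        _ = (3/2) * (1/3 : ℝ) ^ n := by ring
    · have := tendsto_pow_atTop_nhds_zero_of_lt_one (by norm_num : (0:ℝ) ≤ 1/3)
        (by norm_num : (1/3 : ℝ) < 1)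
      simpa using this.const_mul (3/2 : ℝ)
  have h2 : Filter.Tendsto (fun n => ∑ i ∈ Finset.range n, btDig s i * (1/3 : ℝ) ^ i)
      Filter.atTop (nhds s) := by
    have := (tendsto_const_nhds (x := s) (f := Filter.atTop (α := ℕ))).sub h0
    rw [sub_zero] at this
    refine this.congr fun n => ?_
    rw [btPartial]
  exact tendsto_nhds_unique h1 h2

/-! ### Explicit tsum computations -/

lemma tsum_tail {l : ℝ} (h0 : 0 ≤ l) (h1 : l < 1) :
    ∑' n : ℕ, l ^ (n+1) = l * (1 - l)⁻¹ := by
  have : (fun n : ℕ => l ^ (n+1)) = fun n : ℕ => l * l ^ n := by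
    funext n; rw [pow_succ]; ring
  rw [this, tsum_mul_left, tsum_geometric_of_lt_one h0 h1]

lemma tsum_cod1 {l : ℝ} (h0 : 0 ≤ l) (h1 : l < 1) :
    ∑' n : ℕ, (if n = 0 then (0:ℝ) else 1) * l ^ n = l * (1 - l)⁻¹ := by
  have hsum : Summable fun n : ℕ => (if n = 0 then (0:ℝ) else 1) * l ^ n :=
    summable_cod (fun n => by split_ifs <;> norm_num) h0 h1
  rw [hsum.tsum_eq_zero_add]
  simp only [if_pos rfl, zero_mul, zero_add]
  have : (fun n : ℕ => (if n + 1 = 0 then (0:ℝ) else 1) * l ^ (n+1))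
      = fun n : ℕ => l ^ (n+1) := by
    funext n; simp
  rw [this, tsum_tail h0 h1]
  norm_num

lemma tsum_cod2 {l : ℝ} (h0 : 0 ≤ l) (h1 : l < 1) :
    ∑' n : ℕ, (if n = 0 then (1:ℝ) else -1) * l ^ n = 1 - l * (1 - l)⁻¹ := by
  have hsum : Summable fun n : ℕ => (if n = 0 then (1:ℝ) else -1) * l ^ n :=
    summable_cod (fun n => by split_ifs <;> norm_num) h0 h1
  rw [hsum.tsum_eq_zero_add]
  simp only [if_pos rfl, one_mul, pow_zero]
  have : (fun n : ℕ => (if n + 1 = 0 then (1:ℝ) else -1) * l ^ (n+1))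
      = fun n : ℕ => -(l ^ (n+1)) := by
    funext n; simp
  rw [this, tsum_neg, tsum_tail h0 h1]
  norm_num
  ring

/-! ### The main theorem -/

theorem stmt11 (t : ℝ) (ht : t ∈ Set.Ioo (0 : ℝ) 1) (ht3 : t ≠ 1/3) :
    IsLeast {l | l ∈ Set.Ioc (0 : ℝ) (1/3) ∧ (Cset l ∩ ((fun x => x + t) '' Cset l)).Nonempty}
      (min t ((1 - t) / 2)) ∧
    IsGreatest {l | l ∈ Set.Ioc (0 : ℝ) (1/3) ∧ (Cset l ∩ ((fun x => x + t) '' Cset l)).Nonempty}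
      (1/3) := by
  obtain ⟨ht0, ht1⟩ := ht
  constructor
  · constructor
    · -- membership of the minimum
      have hmpos : 0 < min t ((1 - t)/2) := lt_min ht0 (by linarith)
      have hmle : min t ((1 - t)/2) ≤ 1/3 := by
        rcases le_total t (1/3) with h | h
        · exact (min_le_left _ _).trans h
        · exact (min_le_right _ _).trans (by linarith)
      refine ⟨⟨hmpos, hmle⟩, ?_⟩
      rcases le_total t ((1 - t)/2) with hc | hc
      · rw [min_eq_left hc]
        have ht13 : t ≤ 1/3 := by linarith
        refine mem_of_coding ht0 (by linarith)
          (j := fun n => if n = 0 then 0 else 1) (fun n => by dsimp only; split_ifs <;> norm_num) ?_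
        rw [tsum_cod1 ht0.le (by linarith)]
        have h1t : (1 : ℝ) - t ≠ 0 := by intro h; linarith
        field_simp
      · rw [min_eq_right hc]
        set l := (1 - t)/2 with hl
        have hl0 : 0 < l := by rw [hl]; linarith
        have hl1 : l < 1 := by rw [hl]; linarith
        refine mem_of_coding hl0 hl1
          (j := fun n => if n = 0 then 1 else -1) (fun n => by dsimp only; split_ifs <;> norm_num) ?_
        rw [tsum_cod2 hl0.le hl1]
        have h1l : (1 : ℝ) - l ≠ 0 := by intro h; linarith
        have : (1 - l) * (1 - l * (1 - l)⁻¹) = 1 - 2*l := by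
          field_simp
          ring
        rw [this, hl]
        ring
    · -- lower bound
      rintro l ⟨⟨hl0, hl3⟩, x, hx, y, hy, hyt⟩
      obtain ⟨a, hA, hxa⟩ := hx
      obtain ⟨b, hB, hyb⟩ := hy
      have hl1 : l < 1 := by linarith
      have haabs : ∀ n, |a n| ≤ 1 := fun n => by rcases hA n with h | h <;> rw [h] <;> norm_num
      have hbabs : ∀ n, |b n| ≤ 1 := fun n => by rcases hB n with h | h <;> rw [h] <;> norm_num
      have hsa : Summable fun n => a n * l ^ n := summable_cod haabs hl0.le hl1
      have hsb : Summable fun n => b n * l ^ n := summable_cod hbabs hl0.le hl1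
      have hj : IsCoding (fun n => a n - b n) := by
        intro n
        dsimp only
        rcases hA n with h1 | h1 <;> rcases hB n with h2 | h2 <;> rw [h1, h2] <;> norm_num
      refine lower_bound ht0 hl0 hl3 hj ?_
      have hdiff : (∑' n, a n * l ^ n) - (∑' n, b n * l ^ n)
          = ∑' n, (a n - b n) * l ^ n := by
        rw [← hsa.tsum_sub hsb]
        congr 1; funext n; ring
      have : t = x - y := by simp only at hyt; linarith
      rw [this, hxa, hyb, ← hdiff]
      ring
  · constructor
    · refine ⟨⟨by norm_num, le_refl _⟩, ?_⟩
      have hs : |(3/2 : ℝ) * t| ≤ 3/2 := by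
        rw [abs_of_pos (by linarith)]; linarith
      refine mem_of_coding (by norm_num) (by norm_num) (btDig_mem ((3/2) * t)) ?_
      rw [btTsum hs]
      ring
    · rintro l ⟨⟨_, hl3⟩, _⟩
      exact hl3
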